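/- arXiv:2603.14280 — 3 statements merged into one kernel-verified Lean document; each statement's English description precedes it below -/
import Mathlib

section
/- Let e_0, e_1, ..., e_d be a sequence of positive real numbers satisfying the log-convexity conditions e_{i+1}/e_i ≥ e_i/e_{i-1} for all 1 ≤ i ≤ d-1, with e_0 = A and e_d = B. Then the Minkowski-type inequality holds: (∑_{i=0}^d C(d,i) e_i)^{1/d} ≤ A^{1/d} + B^{1/d}, where C(d,i) denotes the binomial coefficient. -/
open Finset


lemma aux_chebyshev (d i : ℕ) (hid : i ≤ d) (x : ℕ → ℝ)
    (hmono : ∀ j k, j ≤ k → k ≤ d - 1 → x j ≤ x k) :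
    (d : ℝ) * ∑ j ∈ range i, x j ≤ (i : ℝ) * ∑ j ∈ range d, x j := by
  rcases Nat.eq_zero_or_pos i with hi0 | hi1
  · simp [hi0]
  rcases eq_or_lt_of_le hid with rfl | hlt
  · exact le_refl _
  set c := x (i - 1) with hc
  have h1 : ∑ j ∈ range i, x j ≤ (i : ℝ) * c := by
    have := Finset.sum_le_card_nsmul (range i) x c (fun j hj => by
      simp only [mem_range] at hj
      exact hmono j (i-1) (Nat.le_sub_one_of_lt hj) (by omega))
    simpa [nsmul_eq_mul] using this
  have h2 : ((d - i : ℕ) : ℝ) * c ≤ ∑ j ∈ Ico i d, x j := by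
    have := Finset.card_nsmul_le_sum (Ico i d) x c (fun j hj => by
      simp only [mem_Ico] at hj
      exact hmono (i-1) j (by omega) (by omega))
    simpa [nsmul_eq_mul, Nat.card_Ico] using this
  have hsplit : ∑ j ∈ range d, x j = (∑ j ∈ range i, x j) + ∑ j ∈ Ico i d, x j := by
    rw [range_eq_Ico, range_eq_Ico]
    exact (Finset.sum_Ico_consecutive x (Nat.zero_le i) hid).symm
  have hcast : ((d - i : ℕ) : ℝ) = (d : ℝ) - i := by
    push_cast [Nat.cast_sub hid]; ring
  rw [hcast] at h2
  rw [hsplit]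
  have hipos : (0:ℝ) < i := by exact_mod_cast hi1
  have hdi : (0:ℝ) ≤ (d:ℝ) - i := by
    have : (i:ℝ) ≤ d := by exact_mod_cast hid
    linarith
  nlinarith [mul_le_mul_of_nonneg_left h1 hdi, mul_le_mul_of_nonneg_left h2 hipos.le]

lemma aux_pointwise (d : ℕ) (hd : 1 ≤ d) (e : ℕ → ℝ)
    (hpos : ∀ i ≤ d, 0 < e i)
    (hlc : ∀ i, 1 ≤ i → i ≤ d - 1 → e i / e (i - 1) ≤ e (i + 1) / e i)
    (i : ℕ) (hid : i ≤ d) :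
    e i ≤ ((e 0) ^ ((1:ℝ)/d)) ^ (d - i) * ((e d) ^ ((1:ℝ)/d)) ^ i := by
  set L : ℕ → ℝ := fun j => Real.log (e j) with hL
  set x : ℕ → ℝ := fun j => L (j+1) - L j with hx
  have hdpos : (0:ℝ) < d := by exact_mod_cast hd
  have step : ∀ m, m + 1 ≤ d - 1 → x m ≤ x (m+1) := by
    intro m hm
    have h := hlc (m+1) (by omega) hm
    simp only [Nat.add_sub_cancel] at h
    have hm0 : 0 < e m := hpos m (by omega)
    have hm1 : 0 < e (m+1) := hpos (m+1) (by omega)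
    have hm2 : 0 < e (m+2) := hpos (m+2) (by omega)
    have := Real.log_le_log (by positivity) h
    rw [Real.log_div hm1.ne' hm0.ne', Real.log_div hm2.ne' hm1.ne'] at this
    simpa [hx, hL] using this
  have hmono : ∀ j k, j ≤ k → k ≤ d - 1 → x j ≤ x k := by
    intro j k hjk hk
    induction k with
    | zero =>
      have : j = 0 := by omega
      simp [this]
    | succ n ih =>
      rcases Nat.lt_or_ge j (n+1) with h | h
      · exact le_trans (ih (by omega) (by omega)) (step n hk)
      · have : j = n + 1 := by omega
        simp [this]
  have htel : ∀ n, L n - L 0 = ∑ j ∈ range n, x j := fun n =>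
    (Finset.sum_range_sub L n).symm
  have hch := aux_chebyshev d i hid x hmono
  rw [← htel i, ← htel d] at hch
  have hicast : (i:ℝ) ≤ d := by exact_mod_cast hid
  have hkey : L i ≤ (((d:ℝ) - i) * L 0 + i * L d) / d := by
    rw [le_div_iff₀ hdpos]
    nlinarith [hch]
  calc e i = Real.exp (L i) := (Real.exp_log (hpos i hid)).symm
    _ ≤ Real.exp ((((d:ℝ) - i) * L 0 + i * L d) / d) := Real.exp_le_exp.mpr hkey
    _ = ((e 0) ^ ((1:ℝ)/d)) ^ (d - i) * ((e d) ^ ((1:ℝ)/d)) ^ i := by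
        rw [Real.rpow_def_of_pos (hpos 0 (by omega)), Real.rpow_def_of_pos (hpos d le_rfl),
          ← Real.exp_nat_mul, ← Real.exp_nat_mul, ← Real.exp_add]
        congr 1
        push_cast [Nat.cast_sub hid]
        field_simp
        rfl


/-- If a sequence of positive reals `e 0 = A, …, e d = B` satisfies the log-convexity
conditions `e (i+1) / e i ≥ e i / e (i-1)` for `1 ≤ i ≤ d-1`, then the Minkowski-type
inequality `(∑ i, C(d,i) · e i)^(1/d) ≤ A^(1/d) + B^(1/d)` holds. -/
theorem minkowski_type_inequality_of_log_convex
    (d : ℕ) (hd : 1 ≤ d) (e : ℕ → ℝ) (A B : ℝ)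
    (hpos : ∀ i ≤ d, 0 < e i) (h0 : e 0 = A) (hdB : e d = B)
    (hlc : ∀ i, 1 ≤ i → i ≤ d - 1 → e i / e (i - 1) ≤ e (i + 1) / e i) :
    (∑ i ∈ Finset.range (d + 1), (d.choose i : ℝ) * e i) ^ ((1 : ℝ) / d)
      ≤ A ^ ((1 : ℝ) / d) + B ^ ((1 : ℝ) / d) := by
  have hdne : (d:ℝ) ≠ 0 := by
    have : (0:ℝ) < d := by exact_mod_cast hd
    exact this.ne'
  set a := A ^ ((1:ℝ)/d) with ha
  set b := B ^ ((1:ℝ)/d) with hb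
  have hA : 0 < A := h0 ▸ hpos 0 (by omega)
  have hB : 0 < B := hdB ▸ hpos d le_rfl
  have hane : 0 ≤ a := Real.rpow_nonneg hA.le _
  have hbne : 0 ≤ b := Real.rpow_nonneg hB.le _
  have hsum : (∑ i ∈ range (d + 1), (d.choose i : ℝ) * e i)
      ≤ ∑ i ∈ range (d + 1), (d.choose i : ℝ) * (a ^ (d - i) * b ^ i) := by
    apply Finset.sum_le_sum
    intro i hi
    simp only [mem_range] at hi
    have := aux_pointwise d hd e hpos hlc i (by omega)
    rw [h0, hdB] at this
    exact mul_le_mul_of_nonneg_left this (by positivity)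
  have hbinom : ∑ i ∈ range (d + 1), (d.choose i : ℝ) * (a ^ (d - i) * b ^ i)
      = (a + b) ^ d := by
    rw [add_comm a b, add_pow]
    exact Finset.sum_congr rfl (fun i _ => by ring)
  rw [hbinom] at hsum
  have hnn : 0 ≤ ∑ i ∈ range (d + 1), (d.choose i : ℝ) * e i := by
    apply Finset.sum_nonneg
    intro i hi
    simp only [mem_range] at hi
    exact mul_nonneg (by positivity) (hpos i (by omega)).le
  have h1 := Real.rpow_le_rpow hnn hsum (by positivity : (0:ℝ) ≤ 1/d)
  have h2 : ((a + b) ^ d) ^ ((1:ℝ)/d) = a + b := by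
    rw [← Real.rpow_natCast (a + b) d, ← Real.rpow_mul (by positivity),
      mul_one_div, div_self hdne, Real.rpow_one]
  rw [h2] at h1
  exact h1
end

section
/- In the semigroup of Newton polygons under Minkowski sum, the Teissier product ⋆ (extended by distributivity from elementary polygons) distributes over the Minkowski sum: P ⋆ (Q + R) = P ⋆ Q + P ⋆ R for elementary Newton polygons P, Q, R, where + is Minkowski sum of the corresponding plane convex regions. Formally, working with formal ℕ-linear combinations of elementary polygons modulo the relations identifying combinations with the same associated convex polygon, ⋆ is well defined and distributive. -/
open Pointwise

/-- The region of the plane associated to the elementary Newton polygon `{ℓ choose h}`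
(encoded as the pair `(ℓ, h)`): the points of the first quadrant lying on or above
the line through `(ℓ, 0)` and `(0, h)`. -/
def elemRegion (P : ℕ × ℕ) : Set (ℝ × ℝ) :=
  {p | 0 ≤ p.1 ∧ 0 ≤ p.2 ∧ (P.2 : ℝ) * p.1 + (P.1 : ℝ) * p.2 ≥ (P.1 : ℝ) * (P.2 : ℝ)}

/-- The region (Newton polygon) associated to a formal ℕ-linear combination of
elementary Newton polygons, i.e. a multiset of them: the Minkowski sum of their
regions. -/
def regionOf (s : Multiset (ℕ × ℕ)) : Set (ℝ × ℝ) :=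
  (s.map elemRegion).sum

/-- Teissier's product extended to formal combinations of elementary Newton polygons,
given by the rule `{ℓ₁ choose h₁} ⋆ {ℓ₂ choose h₂} = {ℓ₁ℓ₂ choose min(ℓ₁h₂, ℓ₂h₁)}`
on pairs, extended bilinearly. -/
def starMul (s t : Multiset (ℕ × ℕ)) : Multiset (ℕ × ℕ) :=
  s.bind fun p => t.map fun q => (p.1 * q.1, min (p.1 * q.2) (q.1 * p.2))

noncomputable def Fn (s : Multiset (ℕ × ℕ)) (a b : ℝ) : ℝ :=
  (s.map (fun p => min (a * p.1) (b * p.2))).sum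

lemma regionOf_cons (p : ℕ × ℕ) (s : Multiset (ℕ × ℕ)) :
    regionOf (p ::ₘ s) = elemRegion p + regionOf s := by
  simp [regionOf]

lemma regionOf_zero : regionOf 0 = (0 : Set (ℝ × ℝ)) := by simp [regionOf]

lemma Fn_cons (p : ℕ × ℕ) (s : Multiset (ℕ × ℕ)) (a b : ℝ) :
    Fn (p ::ₘ s) a b = min (a * p.1) (b * p.2) + Fn s a b := by
  simp [Fn]

lemma elem_lb {p : ℕ × ℕ} {z : ℝ × ℝ} (hz : z ∈ elemRegion p) {a b : ℝ}
    (ha : 0 ≤ a) (hb : 0 ≤ b) :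
    min (a * p.1) (b * p.2) ≤ a * z.1 + b * z.2 := by
  obtain ⟨hx, hy, hline⟩ := hz
  rcases le_total (a * p.1) (b * p.2) with h1 | h1
  · rw [min_eq_left h1]
    rcases Nat.eq_zero_or_pos p.2 with h2 | h2
    · have : (p.2 : ℝ) = 0 := by exact_mod_cast h2
      nlinarith [mul_nonneg ha hx, mul_nonneg hb hy]
    · have h2' : (0:ℝ) < p.2 := by exact_mod_cast h2
      nlinarith [mul_nonneg ha hx, mul_nonneg hb hy, mul_le_mul_of_nonneg_left hline ha]
  · rw [min_eq_right h1]
    rcases Nat.eq_zero_or_pos p.1 with h2 | h2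
    · have : (p.1 : ℝ) = 0 := by exact_mod_cast h2
      nlinarith [mul_nonneg ha hx, mul_nonneg hb hy]
    · have h2' : (0:ℝ) < p.1 := by exact_mod_cast h2
      nlinarith [mul_nonneg ha hx, mul_nonneg hb hy, mul_le_mul_of_nonneg_left hline hb]

lemma region_lb {s : Multiset (ℕ × ℕ)} {z : ℝ × ℝ} (hz : z ∈ regionOf s) {a b : ℝ}
    (ha : 0 ≤ a) (hb : 0 ≤ b) : Fn s a b ≤ a * z.1 + b * z.2 := by
  induction s using Multiset.induction generalizing z with
  | empty =>
    rw [regionOf_zero] at hz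
    simp only [Set.mem_zero] at hz
    subst hz; simp [Fn]
  | cons p s ih =>
    rw [regionOf_cons] at hz
    rw [Set.mem_add] at hz
    obtain ⟨u, hu, v, hv, huv⟩ := hz
    have h1 := elem_lb hu ha hb
    have h2 := ih hv
    rw [Fn_cons]
    have : z.1 = u.1 + v.1 ∧ z.2 = u.2 + v.2 := by
      constructor <;> rw [← huv] <;> rfl
    obtain ⟨e1, e2⟩ := this
    rw [e1, e2]; ring_nf; nlinarith [h1, h2]

lemma Fn_superadd (s : Multiset (ℕ × ℕ)) (a1 b1 a2 b2 l m : ℝ)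
    (hl : 0 ≤ l) (hm : 0 ≤ m) :
    l * Fn s a1 b1 + m * Fn s a2 b2 ≤ Fn s (l * a1 + m * a2) (l * b1 + m * b2) := by
  induction s using Multiset.induction with
  | empty => simp [Fn]
  | cons p s ih =>
    simp only [Fn_cons]
    have key : l * min (a1 * p.1) (b1 * p.2) + m * min (a2 * p.1) (b2 * p.2)
        ≤ min ((l * a1 + m * a2) * p.1) ((l * b1 + m * b2) * p.2) := by
      apply le_min
      · have := min_le_left (a1 * (p.1:ℝ)) (b1 * p.2)
        have := min_le_left (a2 * (p.1:ℝ)) (b2 * p.2)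
        nlinarith [mul_le_mul_of_nonneg_left (min_le_left (a1 * (p.1:ℝ)) (b1 * p.2)) hl,
          mul_le_mul_of_nonneg_left (min_le_left (a2 * (p.1:ℝ)) (b2 * p.2)) hm]
      · nlinarith [mul_le_mul_of_nonneg_left (min_le_right (a1 * (p.1:ℝ)) (b1 * p.2)) hl,
          mul_le_mul_of_nonneg_left (min_le_right (a2 * (p.1:ℝ)) (b2 * p.2)) hm]
    linarith

lemma exists_min_point (s : Multiset (ℕ × ℕ)) {a b : ℝ} (ha : 0 ≤ a) (hb : 0 ≤ b) :
    ∃ z ∈ regionOf s, a * z.1 + b * z.2 = Fn s a b := by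
  induction s using Multiset.induction with
  | empty =>
    refine ⟨0, ?_, by simp [Fn]⟩
    rw [regionOf_zero]; simp
  | cons p s ih =>
    obtain ⟨z, hz, hzv⟩ := ih
    rcases le_total (a * p.1) (b * p.2) with h1 | h1
    · refine ⟨((p.1 : ℝ), 0) + z, ?_, ?_⟩
      · rw [regionOf_cons]
        exact Set.add_mem_add ⟨by positivity, le_refl _, by simp [mul_comm]⟩ hz
      · rw [Fn_cons, min_eq_left h1]
        simp only [Prod.fst_add, Prod.snd_add]
        push_cast
        linarith [hzv]
    · refine ⟨(0, (p.2 : ℝ)) + z, ?_, ?_⟩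
      · rw [regionOf_cons]
        refine Set.add_mem_add ⟨le_refl _, by positivity, ?_⟩ hz
        simp
      · rw [Fn_cons, min_eq_right h1]
        simp only [Prod.fst_add, Prod.snd_add]
        push_cast
        linarith [hzv]

lemma le_region (s : Multiset (ℕ × ℕ)) (hs : s ≠ 0) (z : ℝ × ℝ)
    (hz : ∀ a b : ℝ, 0 ≤ a → 0 ≤ b → Fn s a b ≤ a * z.1 + b * z.2) :
    z ∈ regionOf s := by
  induction s using Multiset.induction generalizing z with
  | empty => exact absurd rfl hs
  | cons p s ih =>
    set ℓ : ℝ := (p.1 : ℝ) with hℓdef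
    set h : ℝ := (p.2 : ℝ) with hhdef
    have hℓ0 : 0 ≤ ℓ := Nat.cast_nonneg _
    have hh0 : 0 ≤ h := Nat.cast_nonneg _
    rcases eq_or_ne s 0 with rfl | hsne
    · -- base case: single element
      rw [regionOf_cons, regionOf_zero, add_zero]
      have h1 := hz 1 0 zero_le_one le_rfl
      have h2 := hz 0 1 le_rfl zero_le_one
      have h3 := hz (p.2 : ℝ) (p.1 : ℝ) (Nat.cast_nonneg _) (Nat.cast_nonneg _)
      rw [Fn_cons] at h1 h2 h3
      simp only [Fn, Multiset.map_zero, Multiset.sum_zero, add_zero, one_mul, zero_mul,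
        mul_zero, zero_add] at h1 h2 h3
      rw [min_eq_right (Nat.cast_nonneg _ : (0:ℝ) ≤ (p.1:ℝ))] at h1
      rw [min_eq_left (Nat.cast_nonneg _ : (0:ℝ) ≤ (p.2:ℝ))] at h2
      rw [min_eq_right (le_of_eq (mul_comm ((p.1:ℝ)) ((p.2:ℝ))))] at h3
      exact ⟨by linarith, by linarith, by linarith⟩
    · -- inductive step
      set x := z.1
      set y := z.2
      set G : ℝ → ℝ → ℝ := fun a b => Fn s a b + a * ℓ - (a * x + b * y) with hGdef
      -- constraints: for all 0≤a,0≤b : min(aℓ,bh) + Fn s a b ≤ a x + b y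
      have hcon : ∀ a b : ℝ, 0 ≤ a → 0 ≤ b →
          min (a * ℓ) (b * h) + Fn s a b ≤ a * x + b * y := by
        intro a b ha hb
        have := hz a b ha hb
        rw [Fn_cons] at this
        linarith
      set T : Set ℝ := insert 0 {t | ∃ a b : ℝ, 0 ≤ a ∧ 0 ≤ b ∧ b * h < a * ℓ ∧
          t = G a b / (a * ℓ - b * h)} with hTdef
      have hTne : T.Nonempty := ⟨0, Set.mem_insert _ _⟩
      have hmem_le_one : ∀ t ∈ T, t ≤ 1 := by
        rintro t (rfl | ⟨a, b, ha, hb, hlt, rfl⟩)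
        · exact zero_le_one
        · have hD : 0 < a * ℓ - b * h := by linarith
          rw [div_le_one hD]
          have := hcon a b ha hb
          rw [min_eq_right (le_of_lt hlt)] at this
          simp only [hGdef]
          linarith
      have hbdd : BddAbove T := ⟨1, fun t ht => hmem_le_one t ht⟩
      set θ := sSup T with hθdef
      have hθ0 : 0 ≤ θ := le_csSup hbdd (Set.mem_insert _ _)
      have hθ1 : θ ≤ 1 := csSup_le hTne hmem_le_one
      have key : ∀ a b : ℝ, 0 ≤ a → 0 ≤ b → G a b ≤ θ * (a * ℓ - b * h) := by
        intro a b ha hb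
        rcases lt_trichotomy (b * h) (a * ℓ) with hlt | heq | hgt
        · have hD : 0 < a * ℓ - b * h := by linarith
          have hmem : G a b / (a * ℓ - b * h) ∈ T :=
            Set.mem_insert_of_mem _ ⟨a, b, ha, hb, hlt, rfl⟩
          have := le_csSup hbdd hmem
          calc G a b = (G a b / (a * ℓ - b * h)) * (a * ℓ - b * h) := by
                field_simp
            _ ≤ θ * (a * ℓ - b * h) := by
                apply mul_le_mul_of_nonneg_right this (le_of_lt hD)
        · have := hcon a b ha hb
          rw [min_eq_left (le_of_eq heq.symm)] at this
          simp only [hGdef]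
          rw [← heq]
          ring_nf
          nlinarith [this]
        · -- a ℓ < b h : need θ ≤ G a b / (aℓ - bh) with negative denominator
          have hD : 0 < b * h - a * ℓ := by linarith
          have hG0 : G a b ≤ 0 := by
            have := hcon a b ha hb
            rw [min_eq_left (le_of_lt hgt)] at this
            simp only [hGdef]; linarith
          have hub : θ ≤ -(G a b) / (b * h - a * ℓ) := by
            apply csSup_le hTne
            rintro t (rfl | ⟨a1, b1, ha1, hb1, hlt1, rfl⟩)
            · exact div_nonneg (by linarith) (le_of_lt hD)
            · have hD1 : 0 < a1 * ℓ - b1 * h := by linarith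
              rw [div_le_div_iff₀ hD1 hD]
              -- cross condition
              have hA0 : (0:ℝ) ≤ (b * h - a * ℓ) * a1 + (a1 * ℓ - b1 * h) * a :=
                add_nonneg (mul_nonneg hD.le ha1) (mul_nonneg hD1.le ha)
              have hB0 : (0:ℝ) ≤ (b * h - a * ℓ) * b1 + (a1 * ℓ - b1 * h) * b :=
                add_nonneg (mul_nonneg hD.le hb1) (mul_nonneg hD1.le hb)
              have h1 := hcon _ _ hA0 hB0
              rw [min_eq_left (le_of_eq (by ring))] at h1
              have h2 := Fn_superadd s a1 b1 a b (b * h - a * ℓ) (a1 * ℓ - b1 * h)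
                (le_of_lt hD) (le_of_lt hD1)
              simp only [hGdef]
              linarith [h1, h2]
          calc G a b = -((-(G a b) / (b * h - a * ℓ)) * (b * h - a * ℓ)) := by
                field_simp
            _ ≤ θ * (a * ℓ - b * h) := by nlinarith [mul_le_mul_of_nonneg_right hub (le_of_lt hD)]
      -- now decompose z
      have hz1 : (ℓ * (1 - θ), h * θ) ∈ elemRegion p := by
        refine ⟨mul_nonneg hℓ0 (by linarith), mul_nonneg hh0 hθ0, ?_⟩
        have : h * (ℓ * (1 - θ)) + ℓ * (h * θ) = ℓ * h := by ring
        simp only [hℓdef, hhdef] at this ⊢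
        rw [this]
      have hz2 : (x - ℓ * (1 - θ), y - h * θ) ∈ regionOf s := by
        apply ih hsne
        intro a b ha hb
        have := key a b ha hb
        simp only [hGdef] at this
        dsimp only
        nlinarith [this]
      rw [regionOf_cons]
      have := Set.add_mem_add hz1 hz2
      convert this using 1
      have : z = (x, y) := rfl
      rw [this, Prod.mk_add_mk]
      congr 1 <;> ring

lemma region_char (s : Multiset (ℕ × ℕ)) (hs : s ≠ 0) :
    regionOf s = {z : ℝ × ℝ | ∀ a b : ℝ, 0 ≤ a → 0 ≤ b → Fn s a b ≤ a * z.1 + b * z.2} := by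
  ext z
  constructor
  · intro hz a b ha hb
    exact region_lb hz ha hb
  · intro hz
    exact le_region s hs z hz

lemma Fn_eq_of_region_eq {s s' : Multiset (ℕ × ℕ)} (hreg : regionOf s = regionOf s')
    {a b : ℝ} (ha : 0 ≤ a) (hb : 0 ≤ b) : Fn s a b = Fn s' a b := by
  apply le_antisymm
  · obtain ⟨z, hz, hzv⟩ := exists_min_point s' ha hb
    rw [← hreg] at hz
    rw [← hzv]
    exact region_lb hz ha hb
  · obtain ⟨z, hz, hzv⟩ := exists_min_point s ha hb
    rw [hreg] at hz
    rw [← hzv]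
    exact region_lb hz ha hb

lemma min_key (a b l h q1 q2 : ℝ) (hb : 0 ≤ b) (hl : 0 ≤ l) :
    min (a * (l * q1)) (b * min (l * q2) (q1 * h)) =
      min (min (a * q1) (b * q2) * l) ((b * q1) * h) := by
  rw [mul_min_of_nonneg _ _ hb, ← min_assoc, min_mul_of_nonneg _ _ hl]
  congr 1
  · congr 1 <;> ring
  · ring

lemma Fn_star (s t : Multiset (ℕ × ℕ)) (a b : ℝ) (hb : 0 ≤ b) :
    Fn (starMul s t) a b =
      (t.map (fun q => Fn s (min (a * q.1) (b * q.2)) (b * q.1))).sum := by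
  induction s using Multiset.induction with
  | empty =>
    simp [starMul, Fn]
  | cons p s ih =>
    have e : starMul (p ::ₘ s) t =
        (t.map fun q => (p.1 * q.1, min (p.1 * q.2) (q.1 * p.2))) + starMul s t := by
      simp [starMul, Multiset.cons_bind]
    rw [e]
    have hadd : Fn ((t.map fun q => (p.1 * q.1, min (p.1 * q.2) (q.1 * p.2))) +
        starMul s t) a b
        = Fn (t.map fun q => (p.1 * q.1, min (p.1 * q.2) (q.1 * p.2))) a b
          + Fn (starMul s t) a b := by
      simp [Fn]
    rw [hadd, ih]
    have h1 : Fn (t.map fun q => (p.1 * q.1, min (p.1 * q.2) (q.1 * p.2))) a b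
        = (t.map (fun q => min (min (a * q.1) (b * q.2) * p.1) ((b * q.1) * p.2))).sum := by
      rw [Fn, Multiset.map_map]
      congr 1
      apply Multiset.map_congr rfl
      intro q hq
      simp only [Function.comp_apply]
      push_cast
      exact min_key a b (p.1:ℝ) (p.2:ℝ) (q.1:ℝ) (q.2:ℝ) hb (Nat.cast_nonneg _)
    rw [h1]
    have h2 : (t.map (fun q => Fn (p ::ₘ s) (min (a * q.1) (b * q.2)) (b * q.1))).sum
        = (t.map (fun q => min (min (a * q.1) (b * q.2) * p.1) ((b * q.1) * p.2))).sum
          + (t.map (fun q => Fn s (min (a * q.1) (b * q.2)) (b * q.1))).sum := by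
      rw [← Multiset.sum_map_add]
      apply congrArg
      apply Multiset.map_congr rfl
      intro q hq
      rw [Fn_cons]
    rw [h2]

lemma Fn_one_zero (s : Multiset (ℕ × ℕ)) : Fn s 1 0 = 0 := by
  induction s using Multiset.induction with
  | empty => simp [Fn]
  | cons p s ih =>
    rw [Fn_cons, ih, add_zero, one_mul, zero_mul, min_eq_right (Nat.cast_nonneg _)]

lemma region_pt_of_pos {s : Multiset (ℕ × ℕ)} (hs : s ≠ 0) (hpos : ∀ p ∈ s, 1 ≤ p.1) :
    ∃ z ∈ regionOf s, 1 ≤ z.1 := by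
  obtain ⟨p, hp⟩ := Multiset.exists_mem_of_ne_zero hs
  obtain ⟨v, rfl⟩ : ∃ v, s = p ::ₘ v := ⟨s.erase p, (Multiset.cons_erase hp).symm⟩
  obtain ⟨z, hz, _⟩ := exists_min_point v (le_refl (0:ℝ)) (le_refl (0:ℝ))
  have hz1 : 0 ≤ z.1 := by
    have := region_lb hz zero_le_one le_rfl
    rw [Fn_one_zero] at this; linarith
  refine ⟨((p.1:ℝ), (p.2:ℝ)) + z, ?_, ?_⟩
  · rw [regionOf_cons]
    refine Set.add_mem_add ⟨Nat.cast_nonneg _, Nat.cast_nonneg _, ?_⟩ hz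
    nlinarith [mul_nonneg (Nat.cast_nonneg p.1 : (0:ℝ) ≤ p.1)
      (Nat.cast_nonneg p.2 : (0:ℝ) ≤ p.2)]
  · have : 1 ≤ (p.1:ℝ) := by exact_mod_cast hpos p (Multiset.mem_cons_self p v)
    simp only [Prod.fst_add]
    linarith

lemma starMul_ne_zero {s t : Multiset (ℕ × ℕ)} (hs : s ≠ 0) (ht : t ≠ 0) :
    starMul s t ≠ 0 := by
  obtain ⟨p, hp⟩ := Multiset.exists_mem_of_ne_zero hs
  obtain ⟨q, hq⟩ := Multiset.exists_mem_of_ne_zero ht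
  intro h
  have : (p.1 * q.1, min (p.1 * q.2) (q.1 * p.2)) ∈ starMul s t := by
    rw [starMul]; exact Multiset.mem_bind.mpr ⟨p, hp, Multiset.mem_map_of_mem _ hq⟩
  rw [h] at this
  simp at this

/-- On formal ℕ-linear combinations of elementary Newton polygons (with `ℓ ≥ 1`),
considered modulo the identification of combinations having the same associated
convex region under Minkowski sum, the Teissier product `⋆` is well defined, and it
distributes over the Minkowski sum: `P ⋆ (Q + R) = P ⋆ Q + P ⋆ R`. -/
theorem starMul_well_defined_and_distrib :
    (∀ s s' t : Multiset (ℕ × ℕ),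
      (∀ p ∈ s, 1 ≤ p.1) → (∀ p ∈ s', 1 ≤ p.1) → (∀ p ∈ t, 1 ≤ p.1) →
      regionOf s = regionOf s' → regionOf (starMul s t) = regionOf (starMul s' t)) ∧
    (∀ s t u : Multiset (ℕ × ℕ), starMul s (t + u) = starMul s t + starMul s u) := by
  constructor
  · intro s s' t hs hs' ht hreg
    rcases eq_or_ne t 0 with rfl | htne
    · simp [starMul]
    rcases eq_or_ne s 0 with rfl | hsne
    · rcases eq_or_ne s' 0 with rfl | hs'ne
      · rfl
      · exfalso
        obtain ⟨z, hz, hz1⟩ := region_pt_of_pos hs'ne hs'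
        rw [← hreg, regionOf_zero] at hz
        simp only [Set.mem_zero] at hz
        rw [hz] at hz1
        simp at hz1
        linarith
    rcases eq_or_ne s' 0 with rfl | hs'ne
    · exfalso
      obtain ⟨z, hz, hz1⟩ := region_pt_of_pos hsne hs
      rw [hreg, regionOf_zero] at hz
      simp only [Set.mem_zero] at hz
      rw [hz] at hz1
      simp at hz1
      linarith
    · have hF : ∀ a b : ℝ, 0 ≤ a → 0 ≤ b →
          Fn (starMul s t) a b = Fn (starMul s' t) a b := by
        intro a b ha hb
        rw [Fn_star s t a b hb, Fn_star s' t a b hb]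
        apply congrArg
        apply Multiset.map_congr rfl
        intro q hq
        exact Fn_eq_of_region_eq hreg
          (le_min (mul_nonneg ha (Nat.cast_nonneg _)) (mul_nonneg hb (Nat.cast_nonneg _)))
          (mul_nonneg hb (Nat.cast_nonneg _))
      rw [region_char _ (starMul_ne_zero hsne htne),
        region_char _ (starMul_ne_zero hs'ne htne)]
      ext z
      simp only [Set.mem_setOf_eq]
      constructor <;> intro H a b ha hb
      · rw [← hF a b ha hb]; exact H a b ha hb
      · rw [hF a b ha hb]; exact H a b ha hb
  · intro s t u
    simp [starMul, Multiset.map_add, Multiset.bind_add]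
end

section
/- Let 𝔞 ⊆ 𝔟 be ideals in a commutative ring R with 𝔞 ⊆ 𝔟 and suppose every element of 𝔟 is integral over 𝔞 (i.e., 𝔟 is contained in the integral closure of 𝔞). Then for every n ≥ 1, every element of 𝔟^n is integral over 𝔞^n; that is, integral closure of ideals is compatible with powers: 𝔟^n ⊆ integral closure of 𝔞^n. -/
open Finset

/-- `x` is integral over the ideal `I`: it satisfies an equation
`x^m + a_1 x^(m-1) + ⋯ + a_m = 0` with `a_i ∈ I^i`. -/
def IsIntegralOverIdeal {R : Type} [CommRing R] (I : Ideal R) (x : R) : Prop :=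
  ∃ (m : ℕ) (a : ℕ → R), 0 < m ∧ (∀ i, 1 ≤ i → i ≤ m → a i ∈ I ^ i) ∧
    x ^ m + ∑ i ∈ Finset.Icc 1 m, a i * x ^ (m - i) = 0

set_option synthInstance.maxHeartbeats 800000 in
open Polynomial in
/-- If `y` is integral over the ideal `I`, then `y·X` is integral over the Rees algebra. -/
lemma monomial_isIntegral_reesAlgebra {R : Type} [CommRing R] {I : Ideal R} {y : R}
    (hy : IsIntegralOverIdeal I y) :
    IsIntegral (reesAlgebra I) (monomial 1 y : R[X]) := by
  obtain ⟨m, a, hm, ha, heq⟩ := hy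
  set b : ℕ → R := fun i => if 1 ≤ i ∧ i ≤ m then a i else 0 with hb
  have hbmem : ∀ i, b i ∈ I ^ i := by
    intro i
    by_cases hi : 1 ≤ i ∧ i ≤ m
    · simpa [hb, hi] using ha i hi.1 hi.2
    · simp [hb, hi]
  have hbeq : y ^ m + ∑ i ∈ Finset.Icc 1 m, b i * y ^ (m - i) = 0 := by
    rw [← heq]
    congr 1
    refine Finset.sum_congr rfl fun i hi => ?_
    simp only [Finset.mem_Icc] at hi
    simp [hb, hi.1, hi.2]
  set c : ℕ → reesAlgebra I := fun i =>
    ⟨monomial i (b i), reesAlgebra.monomial_mem.mpr (hbmem i)⟩ with hc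
  refine ⟨Polynomial.X ^ m + ∑ i ∈ Finset.Icc 1 m,
      Polynomial.C (c i) * Polynomial.X ^ (m - i), ?_, ?_⟩
  · apply Polynomial.monic_X_pow_add
    refine lt_of_le_of_lt (Polynomial.degree_sum_le _ _) ?_
    rw [Finset.sup_lt_iff]
    · intro i hi
      simp only [Finset.mem_Icc] at hi
      refine lt_of_le_of_lt (Polynomial.degree_mul_le _ _) ?_
      refine lt_of_le_of_lt (add_le_add Polynomial.degree_C_le
        (Polynomial.degree_X_pow_le _)) ?_
      rw [zero_add]
      exact_mod_cast Nat.sub_lt_of_pos_le hi.1 hi.2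
    · exact_mod_cast WithBot.bot_lt_coe m
  · rw [← Polynomial.aeval_def]
    simp only [map_add, map_pow, map_sum, map_mul, Polynomial.aeval_X, Polynomial.aeval_C]
    have hcoe : ∀ i, (algebraMap (reesAlgebra I) R[X]) (c i) = monomial i (b i) := fun i => rfl
    simp only [hcoe, Polynomial.monomial_pow, one_mul, one_pow]
    have : ∀ i ∈ Finset.Icc 1 m,
        (monomial i (b i) : R[X]) * monomial (m - i) (y ^ (m - i))
          = monomial m (b i * y ^ (m - i)) := by
      intro i hi
      simp only [Finset.mem_Icc] at hi
      rw [Polynomial.monomial_mul_monomial, Nat.add_sub_cancel' hi.2]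
    rw [Finset.sum_congr rfl this, ← map_sum (monomial m), ← map_add (monomial m),
      hbeq, map_zero]

open Polynomial in
/-- The set of `x` with `x·Xᵏ` integral over the Rees algebra of `I`, as an ideal. -/
def integralMonomialIdeal {R : Type} [CommRing R] (I : Ideal R) (k : ℕ) : Ideal R where
  carrier := {x | IsIntegral (reesAlgebra I) (monomial k x : R[X])}
  add_mem' := by
    intro x y hx hy
    simpa [map_add] using IsIntegral.add hx hy
  zero_mem' := by
    simpa using isIntegral_zero (R := reesAlgebra I) (B := R[X])
  smul_mem' := by
    intro r x hx
    have h1 : (monomial k (r * x) : R[X]) = Polynomial.C r * monomial k x := by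
      rw [Polynomial.C_mul_monomial]
    have h2 : IsIntegral (reesAlgebra I) (Polynomial.C r : R[X]) := by
      have : (Polynomial.C r : R[X]) ∈ reesAlgebra I := by
        rw [← Polynomial.monomial_zero_left]
        exact reesAlgebra.monomial_mem.mpr (by simp)
      refine ⟨Polynomial.X - Polynomial.C (⟨Polynomial.C r, this⟩ : reesAlgebra I),
        Polynomial.monic_X_sub_C _, ?_⟩
      rw [Polynomial.eval₂_sub, Polynomial.eval₂_X, Polynomial.eval₂_C]
      exact sub_self _
    show IsIntegral (reesAlgebra I) (Polynomial.monomial k (r • x) : R[X])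
    rw [smul_eq_mul, h1]
    exact h2.mul hx
  
/-- If `𝔞 ⊆ 𝔟` and every element of `𝔟` is integral over `𝔞`, then for every `n ≥ 1`
every element of `𝔟^n` is integral over `𝔞^n`: integral closure of ideals is
compatible with powers. -/
theorem integral_closure_ideal_pow {R : Type} [CommRing R] (I J : Ideal R)
    (hIJ : I ≤ J) (h : ∀ x ∈ J, IsIntegralOverIdeal I x) (n : ℕ) (hn : 1 ≤ n) :
    ∀ x ∈ J ^ n, IsIntegralOverIdeal (I ^ n) x := by
  classical
  -- trivial ring case
  by_cases htriv : (1 : R) = 0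
  · intro x _
    refine ⟨1, fun _ => 0, one_pos, fun i _ _ => ((I ^ n) ^ i).zero_mem, ?_⟩
    have : x = 0 := by
      calc x = x * 1 := (mul_one x).symm
      _ = 0 := by rw [htriv, mul_zero]
    simp [this]
  haveI : Nontrivial R := ⟨1, 0, htriv⟩
  -- step 1 : J ^ n ≤ integralMonomialIdeal I n
  have key : ∀ k : ℕ, 1 ≤ k → J ^ k ≤ integralMonomialIdeal I k := by
    intro k hk
    induction k with
    | zero => omega
    | succ k ih =>
      by_cases hk0 : k = 0
      · subst hk0
        intro x hx
        rw [pow_one] at hx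
        exact monomial_isIntegral_reesAlgebra (h x hx)
      · rw [pow_succ]
        refine Ideal.mul_le.mpr fun y hy z hz => ?_
        have h1 : IsIntegral (reesAlgebra I) (Polynomial.monomial k y : Polynomial R) :=
          ih (by omega) hy
        have h2 : IsIntegral (reesAlgebra I) (Polynomial.monomial 1 z : Polynomial R) :=
          monomial_isIntegral_reesAlgebra (h z hz)
        show IsIntegral (reesAlgebra I) (Polynomial.monomial (k + 1) (y * z) : Polynomial R)
        rw [← Polynomial.monomial_mul_monomial]
        exact IsIntegral.mul h1 h2
  -- step 2 : extract the integral equation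
  intro x hx
  obtain ⟨p, hpmonic, hproot⟩ := key n hn hx
  -- use q = p * X to ensure positive degree
  set q : Polynomial (reesAlgebra I) := p * Polynomial.X with hq
  have hqmonic : q.Monic := hpmonic.mul Polynomial.monic_X
  have hqroot : Polynomial.aeval (Polynomial.monomial n x : Polynomial R) q = 0 := by
    rw [hq, map_mul, Polynomial.aeval_def, hproot, zero_mul]
  set M := q.natDegree with hM
  have hM1 : 1 ≤ M := by
    rw [hM, hq, Polynomial.natDegree_mul_X hpmonic.ne_zero]
    omega
  have hexp := Polynomial.aeval_eq_sum_range (R := reesAlgebra I)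
    (p := q) (Polynomial.monomial n x : Polynomial R)
  rw [hqroot] at hexp
  -- take the coefficient of X^(n*M)
  have hcoeff := congrArg (fun f => Polynomial.coeff f (n * M)) hexp.symm
  simp only [Polynomial.finset_sum_coeff, Polynomial.coeff_zero] at hcoeff
  have hterm : ∀ i ∈ Finset.range (M + 1),
      Polynomial.coeff ((q.coeff i) • (Polynomial.monomial n x : Polynomial R) ^ i) (n * M)
        = Polynomial.coeff (q.coeff i : Polynomial R) (n * (M - i)) * x ^ i := by
    intro i hi
    rw [Finset.mem_range] at hi
    have hiM : i ≤ M := by omega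
    have harith : n * (M - i) + n * i = n * M := by
      rw [← Nat.mul_add, Nat.sub_add_cancel hiM]
    rw [Algebra.smul_def, Polynomial.monomial_pow]
    have : (algebraMap (reesAlgebra I) (Polynomial R)) (q.coeff i)
        = (q.coeff i : Polynomial R) := rfl
    rw [this, ← harith, Polynomial.coeff_mul_monomial]
  rw [Finset.sum_congr rfl hterm] at hcoeff
  -- split off the leading term
  rw [Finset.sum_range_succ] at hcoeff
  have hlead : (q.coeff M : Polynomial R) = 1 := by
    have : q.coeff M = 1 := hqmonic
    rw [this]; rfl
  rw [hlead, Nat.sub_self, Nat.mul_zero, Polynomial.coeff_one_zero, one_mul] at hcoeff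
  -- build the witnesses
  refine ⟨M, fun j => Polynomial.coeff (q.coeff (M - j) : Polynomial R) (n * j), hM1,
    ?_, ?_⟩
  · intro j _ _
    have := (q.coeff (M - j)).2 (n * j)
    rwa [pow_mul] at this
  · rw [add_comm] at hcoeff
    rw [← hcoeff]
    congr 1
    refine Finset.sum_nbij' (fun j => M - j) (fun i => M - i) ?_ ?_ ?_ ?_ ?_
    · intro j hj
      simp only [Finset.mem_Icc] at hj
      simp only [Finset.mem_range]
      omega
    · intro i hi
      simp only [Finset.mem_range] at hi
      simp only [Finset.mem_Icc]
      omega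
    · intro j hj
      simp only [Finset.mem_Icc] at hj
      omega
    · intro i hi
      simp only [Finset.mem_range] at hi
      omega
    · intro j hj
      simp only [Finset.mem_Icc] at hj
      have h1 : M - (M - j) = j := by omega
      simp only [h1]
end
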